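/- Upward monotone convergence: for every situation s and every pointwise non-decreasing sequence (f_n)_{n∈ℕ} of bounded below global variables f_n : Ω → ℝ̄ that converges pointwise to a global variable f : Ω → ℝ̄, one has E_V(f|s) = lim_{n→∞} E_V(f_n|s). -/

import Mathlib

open Filter Topology

noncomputable section

/-- Addition on the extended reals with the convention `(+∞) + (−∞) = (−∞) + (+∞) = +∞`. -/
def eadd (a b : EReal) : EReal := if a = ⊤ ∨ b = ⊤ then ⊤ else a + b

/-- An extended real variable is bounded below. -/
def BddBelowF {Y : Type*} (f : Y → EReal) : Prop := ∃ M : ℝ, ∀ y, (M : EReal) ≤ f y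

/-- (E1): constants are preserved. -/
def UE1 {Y : Type*} (E : (Y → EReal) → EReal) : Prop :=
  ∀ c : ℝ, E (fun _ => (c : EReal)) = (c : EReal)

/-- (E2): sub-additivity on bounded below variables. -/
def UE2 {Y : Type*} (E : (Y → EReal) → EReal) : Prop :=
  ∀ f g : Y → EReal, BddBelowF f → BddBelowF g →
    E (fun y => eadd (f y) (g y)) ≤ eadd (E f) (E g)

/-- (E3): positive homogeneity on bounded below variables. -/
def UE3 {Y : Type*} (E : (Y → EReal) → EReal) : Prop :=
  ∀ l : ℝ, 0 < l → ∀ f : Y → EReal, BddBelowF f →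
    E (fun y => (l : EReal) * f y) = (l : EReal) * E f

/-- (E4): monotonicity on bounded below variables. -/
def UE4 {Y : Type*} (E : (Y → EReal) → EReal) : Prop :=
  ∀ f g : Y → EReal, BddBelowF f → BddBelowF g → (∀ y, f y ≤ g y) → E f ≤ E g

/-- (E5): continuity with respect to non-decreasing sequences of non-negative variables. -/
def UE5 {Y : Type*} (E : (Y → EReal) → EReal) : Prop :=
  ∀ (fs : ℕ → Y → EReal) (f : Y → EReal),
    (∀ n y, 0 ≤ fs n y) → (∀ n y, fs n y ≤ fs (n + 1) y) →
    (∀ y, Tendsto (fun n => fs n y) atTop (𝓝 (f y))) →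
    Tendsto (fun n => E (fs n)) atTop (𝓝 (E f))

/-- An upper expectation: a map satisfying (E1)–(E5). -/
def IsUpperExpectation {Y : Type*} (E : (Y → EReal) → EReal) : Prop :=
  UE1 E ∧ UE2 E ∧ UE3 E ∧ UE4 E ∧ UE5 E

/-- The situation formed by the first `n` states of the path `ω`. -/
def pfx {X : Type*} (ω : ℕ → X) (n : ℕ) : List X := List.ofFn (fun i : Fin n => ω i)

/-- The cylinder event of all paths that go through the situation `s`. -/
def Gamma {X : Type*} (s : List X) : Set (ℕ → X) := {ω | pfx ω s.length = s}

/-- A process is bounded below. -/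
def BddBelowP {X : Type*} (M : List X → EReal) : Prop := ∃ B : ℝ, ∀ t, (B : EReal) ≤ M t

/-- A supermartingale for the imprecise probabilities tree `Q`. -/
def IsSupermartingale {X : Type*} (Q : List X → (X → EReal) → EReal)
    (M : List X → EReal) : Prop :=
  ∀ s : List X, Q s (fun x => M (s ++ [x])) ≤ M s

/-- The pathwise limit inferior of a process. -/
def liminfP {X : Type*} (M : List X → EReal) (ω : ℕ → X) : EReal :=
  Filter.liminf (fun n => M (pfx ω n)) atTop

/-- The game-theoretic upper expectation `E_V(f | s)`. -/
def upExp {X : Type*} (Q : List X → (X → EReal) → EReal)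
    (f : (ℕ → X) → EReal) (s : List X) : EReal :=
  sInf {x : EReal | ∃ M : List X → EReal, IsSupermartingale Q M ∧ BddBelowP M ∧
    (∀ ω ∈ Gamma s, f ω ≤ liminfP M ω) ∧ M s = x}

/-- An event `A` is strictly almost sure within `Γ(s)`: some `s`-test supermartingale
converges to `+∞` on every path of `Γ(s)` outside `A`. -/
def StrictlyAS {X : Type*} (Q : List X → (X → EReal) → EReal) (s : List X)
    (A : Set (ℕ → X)) : Prop :=
  ∃ T : List X → EReal, IsSupermartingale Q T ∧ (∀ t, 0 ≤ T t) ∧ T s = 1 ∧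
    ∀ ω ∈ Gamma s, ω ∉ A → Tendsto (fun n => T (pfx ω n)) atTop (𝓝 (⊤ : EReal))

/-- An `n`-measurable global variable only depends on the first `n` states. -/
def NMeasurable {X : Type*} (n : ℕ) (f : (ℕ → X) → EReal) : Prop :=
  ∀ ω ω' : ℕ → X, pfx ω n = pfx ω' n → f ω = f ω'

/-- A finitary global variable is `n`-measurable for some `n`. -/
def Finitary {X : Type*} (f : (ℕ → X) → EReal) : Prop := ∃ n : ℕ, NMeasurable n f

/-- The bounded below global variables that are pointwise limits of finitary variables. -/
def VbLim {X : Type*} : Set ((ℕ → X) → EReal) :=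
  {f | BddBelowF f ∧ ∃ gs : ℕ → (ℕ → X) → EReal, (∀ n, Finitary (gs n)) ∧
    ∀ ω, Tendsto (fun n => gs n ω) atTop (𝓝 (f ω))}

set_option linter.unusedSectionVars false
namespace Stmt13Aux

/-! ### Generic EReal helpers -/

lemma eadd_eq_add {a b : EReal} (ha : a ≠ ⊥) (hb : b ≠ ⊥) : eadd a b = a + b := by
  unfold eadd
  split
  · rename_i h
    rcases h with h | h
    · rw [h, EReal.top_add_of_ne_bot hb]
    · rw [h, EReal.add_top_of_ne_bot ha]
  · rfl

lemma le_of_forall_add_le {x y : EReal} (h : ∀ ε : ℝ, 0 < ε → x ≤ y + (ε : EReal)) :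
    x ≤ y := by
  induction y with
  | bot =>
    have := h 1 one_pos
    simpa using this
  | coe r =>
    by_contra hlt
    push_neg at hlt
    obtain ⟨q, hq1, hq2⟩ := EReal.lt_iff_exists_rat_btwn.mp hlt
    have hε : (0:ℝ) < (q:ℝ) - r := by
      have : (r : EReal) < ((q:ℝ) : EReal) := by exact_mod_cast hq1
      have := EReal.coe_lt_coe_iff.mp this
      linarith
    have := h ((q:ℝ) - r) hε
    have h2 : (r : EReal) + (((q:ℝ) - r : ℝ) : EReal) = ((q:ℝ) : EReal) := by
      rw [← EReal.coe_add]; norm_num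
    rw [h2] at this
    exact absurd (lt_of_le_of_lt this hq2) (lt_irrefl _)
  | top => exact le_top

lemma tendsto_top_const_mul {c : ℝ} (hc : 0 < c) {u : ℕ → EReal}
    (h : Tendsto u atTop (𝓝 (⊤ : EReal))) :
    Tendsto (fun k => (c : EReal) * u k) atTop (𝓝 (⊤ : EReal)) := by
  rw [EReal.tendsto_nhds_top_iff_real] at h ⊢
  intro r
  filter_upwards [h ((max r 0 + 1) / c)] with k hk
  have h2 : (((max r 0 + 1) / c : ℝ) : EReal) ≤ u k := hk.le
  have h3 : ((c * ((max r 0 + 1) / c) : ℝ) : EReal) ≤ (c : EReal) * u k := by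
    rw [EReal.coe_mul]
    exact mul_le_mul_of_nonneg_left h2 (by exact_mod_cast hc.le)
  have h4 : c * ((max r 0 + 1) / c) = max r 0 + 1 := by field_simp
  rw [h4] at h3
  refine lt_of_lt_of_le ?_ h3
  exact_mod_cast (by have := le_max_left r 0; linarith : r < max r 0 + 1)

/-- `(· + c)` as an order isomorphism of `EReal`, for real `c`. -/
def addIso (c : ℝ) : EReal ≃o EReal where
  toFun x := x + (c : EReal)
  invFun x := x - (c : EReal)
  left_inv x := by exact EReal.add_sub_cancel_right
  right_inv x := by exact EReal.sub_add_cancel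
  map_rel_iff' := by
    intro x y
    constructor
    · intro h
      have h2 : x + (c : EReal) - (c : EReal) ≤ y + (c : EReal) - (c : EReal) :=
        add_le_add_left h _
      rwa [EReal.add_sub_cancel_right, EReal.add_sub_cancel_right] at h2
    · intro h; exact add_le_add_left h _

/-! ### Upper expectation helpers -/

section E
variable {Y : Type*} {E : (Y → EReal) → EReal} (hE : IsUpperExpectation E)
include hE

lemma E_const (c : ℝ) : E (fun _ => (c : EReal)) = c := hE.1 c

lemma E_mono {f g : Y → EReal} (hf : BddBelowF f) (hg : BddBelowF g)
    (h : ∀ y, f y ≤ g y) : E f ≤ E g := hE.2.2.2.1 f g hf hg h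

lemma E_const_le {g : Y → EReal} {c : ℝ} (h : ∀ y, (c : EReal) ≤ g y) :
    (c : EReal) ≤ E g := by
  have := E_mono hE (f := fun _ => (c : EReal)) (g := g) ⟨c, fun _ => le_rfl⟩ ⟨c, h⟩ h
  rwa [E_const hE] at this

lemma E_le_const {g : Y → EReal} {c : ℝ} (hb : BddBelowF g) (h : ∀ y, g y ≤ (c : EReal)) :
    E g ≤ (c : EReal) := by
  have := E_mono hE (f := g) (g := fun _ => (c : EReal)) hb ⟨c, fun _ => le_rfl⟩ h
  rwa [E_const hE] at this

lemma E_ne_bot {g : Y → EReal} (hb : BddBelowF g) : E g ≠ ⊥ := by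
  obtain ⟨B, hB⟩ := hb
  have := E_const_le hE hB
  intro hbot
  rw [hbot] at this
  simp at this

lemma E_const_top : E (fun _ => (⊤ : EReal)) = ⊤ := by
  rw [EReal.eq_top_iff_forall_lt]
  intro r
  have := E_const_le hE (g := fun _ => (⊤ : EReal)) (c := r + 1) (fun _ => le_top)
  refine lt_of_lt_of_le ?_ this
  exact_mod_cast lt_add_one r

lemma E_add {f g : Y → EReal} (hf : BddBelowF f) (hg : BddBelowF g) :
    E (fun y => f y + g y) ≤ E f + E g := by
  obtain ⟨Bf, hBf⟩ := hf
  obtain ⟨Bg, hBg⟩ := hg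
  have h1 : (fun y => f y + g y) = fun y => eadd (f y) (g y) := by
    funext y
    rw [eadd_eq_add (ne_bot_of_le_ne_bot (EReal.coe_ne_bot Bf) (hBf y))
      (ne_bot_of_le_ne_bot (EReal.coe_ne_bot Bg) (hBg y))]
  rw [h1]
  refine le_trans (hE.2.1 f g ⟨Bf, hBf⟩ ⟨Bg, hBg⟩) ?_
  rw [eadd_eq_add (E_ne_bot hE ⟨Bf, hBf⟩) (E_ne_bot hE ⟨Bg, hBg⟩)]

lemma E_shift {g : Y → EReal} (hb : BddBelowF g) (c : ℝ) :
    E (fun y => g y + (c : EReal)) = E g + (c : EReal) := by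
  obtain ⟨B, hB⟩ := hb
  refine le_antisymm ?_ ?_
  · have := E_add hE (f := g) (g := fun _ => (c : EReal)) ⟨B, hB⟩ ⟨c, fun _ => le_rfl⟩
    rwa [E_const hE] at this
  · have hb2 : BddBelowF (fun y => g y + (c : EReal)) :=
      ⟨B + c, fun y => by rw [EReal.coe_add]; exact add_le_add_left (hB y) _⟩
    have := E_add hE (f := fun y => g y + (c : EReal)) (g := fun _ => ((-c : ℝ) : EReal))
      hb2 ⟨-c, fun _ => le_rfl⟩
    rw [E_const hE] at this
    have h1 : (fun y => (g y + (c : EReal)) + ((-c : ℝ) : EReal)) = g := by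
      funext y
      rw [EReal.coe_neg, ← sub_eq_add_neg, EReal.add_sub_cancel_right]
    rw [h1] at this
    have h2 := add_le_add_left this (c : EReal)
    rwa [EReal.coe_neg, ← sub_eq_add_neg, EReal.sub_add_cancel] at h2

lemma E_affine {g : Y → EReal} (hg : ∀ y, 0 ≤ g y) (c : ℝ) {l : ℝ} (hl : 0 < l) :
    E (fun y => (c : EReal) + (l : EReal) * g y) ≤ (c : EReal) + (l : EReal) * E g := by
  have hbg : BddBelowF g := ⟨0, by exact_mod_cast hg⟩
  have hlg : BddBelowF (fun y => (l : EReal) * g y) :=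
    ⟨0, fun y => by
      simpa using mul_nonneg (by exact_mod_cast hl.le) (hg y)⟩
  have h1 : (fun y => (c : EReal) + (l : EReal) * g y)
      = fun y => ((l : EReal) * g y) + (c : EReal) := by
    funext y; rw [add_comm]
  rw [h1, E_shift hE hlg c, hE.2.2.1 l hl g hbg, add_comm]

end E

/-! ### pfx and Gamma -/

section Tree
variable {X : Type*}

lemma pfx_length (ω : ℕ → X) (n : ℕ) : (pfx ω n).length = n := by
  simp [pfx]

lemma pfx_succ (ω : ℕ → X) (n : ℕ) : pfx ω (n + 1) = pfx ω n ++ [ω n] := by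
  unfold pfx
  rw [List.ofFn_succ']
  simp [List.concat_eq_append]

lemma pfx_dropLast (ω : ℕ → X) (n : ℕ) : (pfx ω (n + 1)).dropLast = pfx ω n := by
  rw [pfx_succ]; exact List.dropLast_concat

lemma pfx_prefix (ω : ℕ → X) {m n : ℕ} (h : m ≤ n) : pfx ω m <+: pfx ω n := by
  induction n, h using Nat.le_induction with
  | base => exact List.prefix_rfl
  | succ n hmn ih =>
    refine ih.trans ?_
    rw [pfx_succ]
    exact List.prefix_append _ _

lemma pfx_mem_Gamma (ω : ℕ → X) (n : ℕ) : ω ∈ Gamma (pfx ω n) := by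
  simp [Gamma, pfx_length]

lemma Gamma_prefix {s : List X} {ω : ℕ → X} (h : ω ∈ Gamma s) {n : ℕ}
    (hn : s.length ≤ n) : s <+: pfx ω n := by
  have : pfx ω s.length = s := h
  rw [← this]
  exact pfx_prefix ω hn

lemma Gamma_mono {s t : List X} (h : s <+: t) : Gamma t ⊆ Gamma s := by
  intro ω hω
  have ht : pfx ω t.length = t := hω
  have h1 : pfx ω s.length <+: pfx ω t.length := pfx_prefix ω h.length_le
  rw [ht] at h1
  have h2 : pfx ω s.length <+: s := by
    refine List.prefix_of_prefix_length_le h1 h ?_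
    rw [pfx_length]
  exact h2.eq_of_length (by rw [pfx_length])

lemma Gamma_append {t : List X} {x : X} : Gamma (t ++ [x]) ⊆ Gamma t :=
  Gamma_mono (by simp)

end Tree

/-! ### Supermartingale basics -/

section SM
variable {X : Type*} [Fintype X] [Nonempty X]
  {Q : List X → (X → EReal) → EReal} (hQ : ∀ s : List X, IsUpperExpectation (Q s))
include hQ

lemma exists_le_child {M : List X → EReal} (hbd : BddBelowP M)
    (hsm : IsSupermartingale Q M) (t : List X) : ∃ x : X, M (t ++ [x]) ≤ M t := by
  by_contra hcon
  push_neg at hcon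
  obtain ⟨B, hB⟩ := hbd
  have hQt := hsm t
  set g : X → EReal := fun x => M (t ++ [x]) with hg
  have hne : (Finset.univ : Finset X).Nonempty := Finset.univ_nonempty
  set m : EReal := Finset.univ.inf' hne g with hm
  have hmle : ∀ x : X, m ≤ g x := fun x => Finset.inf'_le _ (Finset.mem_univ x)
  have hltm : M t < m := by
    rw [hm, Finset.lt_inf'_iff]
    intro x _
    exact hcon x
  rcases eq_or_ne m ⊤ with hmt | hmt
  · -- all children are ⊤, so Q t g = ⊤ > M t
    have htop : ∀ x, g x = ⊤ := fun x => top_le_iff.mp (hmt ▸ hmle x)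
    have hQtop : Q t g = ⊤ := by
      have : g = fun _ => (⊤ : EReal) := funext htop
      rw [this]; exact E_const_top (hQ t)
    rw [hQtop] at hQt
    have : M t = ⊤ := top_le_iff.mp hQt
    rw [this] at hltm
    exact not_top_lt hltm
  · have hmb : m ≠ ⊥ := by
      have : (B : EReal) ≤ m := by
        rw [hm, Finset.le_inf'_iff]
        intro x _
        exact hB _
      exact ne_bot_of_le_ne_bot (EReal.coe_ne_bot B) this
    lift m to ℝ using ⟨hmt, hmb⟩ with mr hmr
    have : (mr : EReal) ≤ Q t g := E_const_le (hQ t) hmle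
    exact absurd (lt_of_lt_of_le hltm (this.trans hQt)) (lt_irrefl _)

lemma exists_desc_path {M : List X → EReal} (hsm : IsSupermartingale Q M)
    (hbd : BddBelowP M) (t : List X) :
    ∃ ω : ℕ → X, ω ∈ Gamma t ∧ ∀ k, M (pfx ω (t.length + k)) ≤ M t := by
  classical
  choose step hstep using fun v => exists_le_child hQ hbd hsm v
  set u : ℕ → List X := fun k => Nat.rec t (fun _ v => v ++ [step v]) k with hu
  have hu0 : u 0 = t := rfl
  have husucc : ∀ k, u (k + 1) = u k ++ [step (u k)] := fun k => rfl
  have hulen : ∀ k, (u k).length = t.length + k := by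
    intro k
    induction k with
    | zero => simp [hu0]
    | succ k ih => rw [husucc, List.length_append, ih]; simp; ring
  have huM : ∀ k, M (u k) ≤ M t := by
    intro k
    induction k with
    | zero => rw [hu0]
    | succ k ih => exact le_trans (by rw [husucc]; exact hstep (u k)) ih
  have huchain : ∀ {j j'}, j ≤ j' → u j <+: u j' := by
    intro j j' h
    induction j', h using Nat.le_induction with
    | base => exact List.prefix_rfl
    | succ j' hjj ih => rw [husucc]; exact ih.trans (List.prefix_append _ _)
  set ω : ℕ → X := fun i => (u (i + 1)).getD i (Classical.arbitrary X) with hω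
  have hagree : ∀ j i, i < (u j).length → (u j).getD i (Classical.arbitrary X) = ω i := by
    intro j i hi
    have hiu : i < (u (i + 1)).length := by have := hulen (i + 1); omega
    rcases le_total j (i + 1) with hj | hj
    · show (u j).getD i (Classical.arbitrary X) = (u (i + 1)).getD i (Classical.arbitrary X)
      rw [List.getD_eq_getElem _ _ hi, List.getD_eq_getElem _ _ hiu]
      exact (huchain hj).getElem hi
    · show (u j).getD i (Classical.arbitrary X) = (u (i + 1)).getD i (Classical.arbitrary X)
      rw [List.getD_eq_getElem _ _ hi, List.getD_eq_getElem _ _ hiu]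
      exact ((huchain hj).getElem hiu).symm
  have hpfx : ∀ k, pfx ω (t.length + k) = u k := by
    intro k
    have hlen : (pfx ω (t.length + k)).length = (u k).length := by
      rw [pfx_length, hulen]
    refine List.ext_getElem hlen ?_
    intro i h1 h2
    simp only [pfx, List.getElem_ofFn, Fin.val_mk]
    have := hagree k i h2
    rw [← this, List.getD_eq_getElem _ _ h2]
  refine ⟨ω, ?_, ?_⟩
  · have := hpfx 0
    simpa [Gamma, hu0] using this
  · intro k
    rw [hpfx k]
    exact huM k

lemma witness_nonneg_on {f : (ℕ → X) → EReal} {s : List X}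
    (hf : ∀ ω ∈ Gamma s, 0 ≤ f ω) {M : List X → EReal}
    (hsm : IsSupermartingale Q M) (hbd : BddBelowP M)
    (hlim : ∀ ω ∈ Gamma s, f ω ≤ liminfP M ω) {t : List X} (hst : s <+: t) :
    0 ≤ M t := by
  obtain ⟨ω, hωt, hωM⟩ := exists_desc_path hQ hsm hbd t
  have hωs : ω ∈ Gamma s := Gamma_mono hst hωt
  have h1 : liminfP M ω ≤ M t := by
    refine liminf_le_of_frequently_le' ?_
    refine Filter.frequently_atTop.mpr fun N => ⟨t.length + N, Nat.le_add_left _ _, hωM N⟩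
  exact le_trans (hf ω hωs) (le_trans (hlim ω hωs) h1)

end SM

/-! ### top extension -/

open scoped Classical in
def extP {X : Type*} (s : List X) (M : List X → EReal) : List X → EReal :=
  fun t => if s <+: t then M t else ⊤

section Ext
variable {X : Type*} [Fintype X] [Nonempty X]
  {Q : List X → (X → EReal) → EReal} (hQ : ∀ s : List X, IsUpperExpectation (Q s))

lemma extP_at {s t : List X} (M : List X → EReal) (h : s <+: t) : extP s M t = M t := by
  simp [extP, h]

lemma extP_supermart {s : List X} {M : List X → EReal}
    (hsm : IsSupermartingale Q M) : IsSupermartingale Q (extP s M) := by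
  intro t
  by_cases h : s <+: t
  · have h1 : (fun x => extP s M (t ++ [x])) = fun x => M (t ++ [x]) := by
      funext x
      exact extP_at M (h.trans (List.prefix_append _ _))
    rw [h1, extP_at M h]
    exact hsm t
  · have h2 : extP s M t = ⊤ := by simp [extP, h]
    rw [h2]
    exact le_top

lemma extP_liminf {s : List X} (M : List X → EReal) {ω : ℕ → X} (h : ω ∈ Gamma s) :
    liminfP (extP s M) ω = liminfP M ω := by
  refine liminf_congr ?_
  filter_upwards [Filter.eventually_atTop.mpr ⟨s.length, fun n hn => hn⟩] with n hn
  exact extP_at M (Gamma_prefix h hn)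

include hQ in
lemma extP_nonneg {f : (ℕ → X) → EReal} {s : List X}
    (hf : ∀ ω ∈ Gamma s, 0 ≤ f ω) {M : List X → EReal}
    (hsm : IsSupermartingale Q M) (hbd : BddBelowP M)
    (hlim : ∀ ω ∈ Gamma s, f ω ≤ liminfP M ω) (t : List X) :
    0 ≤ extP s M t := by
  by_cases h : s <+: t
  · rw [extP_at M h]
    exact witness_nonneg_on hQ hf hsm hbd hlim h
  · have h2 : extP s M t = ⊤ := by simp [extP, h]
    rw [h2]
    exact le_top

end Ext

/-! ### upExp basics -/

section UpExp
variable {X : Type*} [Fintype X] [Nonempty X]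
  {Q : List X → (X → EReal) → EReal} (hQ : ∀ s : List X, IsUpperExpectation (Q s))

lemma upExp_le_of_witness {f : (ℕ → X) → EReal} {s : List X} {M : List X → EReal}
    (hsm : IsSupermartingale Q M) (hbd : BddBelowP M)
    (hlim : ∀ ω ∈ Gamma s, f ω ≤ liminfP M ω) : upExp Q f s ≤ M s :=
  sInf_le ⟨M, hsm, hbd, hlim, rfl⟩

lemma exists_witness_lt {f : (ℕ → X) → EReal} {t : List X} {c : EReal}
    (h : upExp Q f t < c) :
    ∃ M : List X → EReal, IsSupermartingale Q M ∧ BddBelowP M ∧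
      (∀ ω ∈ Gamma t, f ω ≤ liminfP M ω) ∧ M t < c := by
  obtain ⟨x, hx, hxc⟩ := sInf_lt_iff.mp h
  obtain ⟨M, h1, h2, h3, h4⟩ := hx
  exact ⟨M, h1, h2, h3, h4 ▸ hxc⟩

lemma upExp_mono {f g : (ℕ → X) → EReal} {s : List X}
    (h : ∀ ω ∈ Gamma s, f ω ≤ g ω) : upExp Q f s ≤ upExp Q g s := by
  refine sInf_le_sInf ?_
  rintro x ⟨M, h1, h2, h3, h4⟩
  exact ⟨M, h1, h2, fun ω hω => (h ω hω).trans (h3 ω hω), h4⟩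

include hQ in
lemma upExp_nonneg {f : (ℕ → X) → EReal} (hf : ∀ ω, 0 ≤ f ω) (t : List X) :
    0 ≤ upExp Q f t := by
  refine le_sInf ?_
  rintro x ⟨M, h1, h2, h3, rfl⟩
  exact witness_nonneg_on hQ (fun ω _ => hf ω) h1 h2 h3 List.prefix_rfl

include hQ in
lemma upExp_supermart {f : (ℕ → X) → EReal} (hf : ∀ ω, 0 ≤ f ω) :
    IsSupermartingale Q (fun t => upExp Q f t) := by
  intro t
  rcases eq_or_ne (upExp Q f t) ⊤ with htop | htop
  · show _ ≤ upExp Q f t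
    rw [htop]; exact le_top
  · refine le_of_forall_gt_imp_ge_of_dense fun c hc => ?_
    obtain ⟨M, h1, h2, h3, h4⟩ := exists_witness_lt (f := f) (t := t) (c := c) hc
    have hch : ∀ x : X, upExp Q f (t ++ [x]) ≤ M (t ++ [x]) := fun x =>
      upExp_le_of_witness h1 h2 fun ω hω => h3 ω (Gamma_append hω)
    obtain ⟨B, hB⟩ := h2
    calc Q t (fun x => upExp Q f (t ++ [x]))
        ≤ Q t (fun x => M (t ++ [x])) := by
          refine E_mono (hQ t) ⟨0, fun x => upExp_nonneg hQ hf _⟩ ⟨B, fun x => hB _⟩ hch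
      _ ≤ M t := h1 t
      _ ≤ c := h4.le

include hQ in
lemma upExp_shift_le (f : (ℕ → X) → EReal) (c : ℝ) (s : List X) :
    upExp Q (fun ω => f ω + (c : EReal)) s ≤ upExp Q f s + (c : EReal) := by
  rcases eq_or_ne (upExp Q f s) ⊤ with htop | htop
  · rw [htop, EReal.top_add_of_ne_bot (EReal.coe_ne_bot c)]
    exact le_top
  refine le_of_forall_gt_imp_ge_of_dense fun d hd => ?_
  have hd2 : upExp Q f s < d - (c : EReal) := by
    have := (addIso (-c)).strictMono hd
    have he : ∀ z : EReal, addIso (-c) z = z - (c : EReal) := fun z => by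
      show z + ((-c : ℝ) : EReal) = z - (c : EReal)
      rw [EReal.coe_neg, sub_eq_add_neg]
    rw [he, he] at this
    rwa [EReal.add_sub_cancel_right] at this
  obtain ⟨M, h1, h2, h3, h4⟩ := exists_witness_lt (f := f) hd2
  have hval : M s + (c : EReal) ≤ d := by
    have := (addIso c).strictMono h4
    have he : ∀ z : EReal, addIso c z = z + (c : EReal) := fun z => rfl
    rw [he, he] at this
    rw [EReal.sub_add_cancel] at this
    exact this.le
  refine le_trans ?_ hval
  refine upExp_le_of_witness (M := fun t => M t + (c : EReal)) ?_ ?_ ?_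
  · intro t
    obtain ⟨B, hB⟩ := h2
    have := E_shift (hQ t) (g := fun x => M (t ++ [x])) ⟨B, fun x => hB _⟩ c
    rw [show (fun x => M (t ++ [x]) + (c : EReal)) = fun y => (fun x => M (t ++ [x])) y
      + (c : EReal) from rfl, this]
    exact add_le_add_left (h1 t) _
  · obtain ⟨B, hB⟩ := h2
    exact ⟨B + c, fun t => by rw [EReal.coe_add]; exact add_le_add_left (hB t) _⟩
  · intro ω hω
    have hlim : liminfP (fun t => M t + (c : EReal)) ω = liminfP M ω + (c : EReal) := by
      have := (addIso c).liminf_apply (f := atTop) (u := fun n => M (pfx ω n))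
      unfold liminfP
      exact this.symm
    rw [hlim]
    exact add_le_add_left (h3 ω hω) _

include hQ in
lemma upExp_shift (f : (ℕ → X) → EReal) (c : ℝ) (s : List X) :
    upExp Q (fun ω => f ω + (c : EReal)) s = upExp Q f s + (c : EReal) := by
  refine le_antisymm (upExp_shift_le hQ f c s) ?_
  have h2 := upExp_shift_le hQ (fun ω => f ω + (c : EReal)) (-c) s
  have h3 : (fun ω => (f ω + (c : EReal)) + ((-c : ℝ) : EReal)) = f := by
    funext ω
    rw [EReal.coe_neg, ← sub_eq_add_neg, EReal.add_sub_cancel_right]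
  rw [h3] at h2
  have h4 := add_le_add_left h2 (c : EReal)
  rwa [EReal.coe_neg, ← sub_eq_add_neg, EReal.sub_add_cancel] at h4

end UpExp


/-! ### Combinators -/

section Comb
variable {X : Type*} [Fintype X] [Nonempty X]
  {Q : List X → (X → EReal) → EReal} (hQ : ∀ s : List X, IsUpperExpectation (Q s))
include hQ

lemma iSup_supermart {Ms : ℕ → List X → EReal}
    (hsm : ∀ n, IsSupermartingale Q (Ms n))
    (h0 : ∀ n t, 0 ≤ Ms n t)
    (hmono : ∀ n t, Ms n t ≤ Ms (n + 1) t) :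
    IsSupermartingale Q (fun t => ⨆ n, Ms n t) := by
  intro t
  have hmono' : ∀ u, Monotone fun n => Ms n u :=
    fun u => monotone_nat_of_le_succ fun n => hmono n u
  have h5 := (hQ t).2.2.2.2 (fun n x => Ms n (t ++ [x])) (fun x => ⨆ n, Ms n (t ++ [x]))
    (fun n x => h0 n _) (fun n x => hmono n _)
    (fun x => tendsto_atTop_iSup (hmono' _))
  refine le_of_tendsto h5 ?_
  filter_upwards with n
  exact le_trans (hsm n t) (le_iSup (fun n => Ms n t) n)

lemma add_supermart {M N : List X → EReal}
    (hM : IsSupermartingale Q M) (hN : IsSupermartingale Q N)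
    (hMb : BddBelowP M) (hNb : BddBelowP N) :
    IsSupermartingale Q (fun t => M t + N t) := by
  intro t
  obtain ⟨B1, hB1⟩ := hMb
  obtain ⟨B2, hB2⟩ := hNb
  have := E_add (hQ t) (f := fun x => M (t ++ [x])) (g := fun x => N (t ++ [x]))
    ⟨B1, fun x => hB1 _⟩ ⟨B2, fun x => hB2 _⟩
  exact le_trans this (add_le_add (hM t) (hN t))

lemma smul_supermart {l : ℝ} (hl : 0 < l) {M : List X → EReal}
    (hM : IsSupermartingale Q M) (hMb : BddBelowP M) :
    IsSupermartingale Q (fun t => (l : EReal) * M t) := by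
  intro t
  obtain ⟨B, hB⟩ := hMb
  rw [show (fun x => (l : EReal) * M (t ++ [x]))
    = fun x => (l : EReal) * (fun x => M (t ++ [x])) x from rfl,
    (hQ t).2.2.1 l hl _ ⟨B, fun x => hB _⟩]
  exact mul_le_mul_of_nonneg_left (hM t) (by exact_mod_cast hl.le)

end Comb

/-! ### The test supermartingale -/

inductive TS (X : Type*) where
  | idle (m : ℕ)
  | active (m : ℕ) (u : List X)

def TS.m {X : Type*} : TS X → ℕ
  | .idle m => m
  | .active m _ => m

section Test
variable {X : Type*} [Fintype X] [Nonempty X]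

open scoped Classical in
/-- Chosen witness supermartingale for `upExp Q g u < a`, extended by `⊤` off the subtree. -/
def wit (Q : List X → (X → EReal) → EReal) (g : (ℕ → X) → EReal) (a : ℝ)
    (u : List X) : List X → EReal :=
  if h : ∃ M : List X → EReal, IsSupermartingale Q M ∧ BddBelowP M ∧
      (∀ ω ∈ Gamma u, g ω ≤ liminfP M ω) ∧ M u < (a : EReal)
  then extP u h.choose else fun _ => 0

variable {Q : List X → (X → EReal) → EReal} (hQ : ∀ s : List X, IsUpperExpectation (Q s))
  {g : (ℕ → X) → EReal} (hg : ∀ ω, 0 ≤ g ω) {a b : ℝ} (ha : 0 < a) (hab : a < b)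

include hQ in
lemma wit_supermart (u : List X) : IsSupermartingale Q (wit Q g a u) := by
  unfold wit
  split
  · rename_i h
    exact extP_supermart (Q := Q) h.choose_spec.1
  · intro t
    have := E_const (hQ t) 0
    simp only [EReal.coe_zero] at this
    exact le_of_eq this

include hQ hg in
lemma wit_nonneg (u t : List X) : 0 ≤ wit Q g a u t := by
  unfold wit
  split
  · rename_i h
    exact extP_nonneg hQ (fun ω _ => hg ω) h.choose_spec.1 h.choose_spec.2.1
      h.choose_spec.2.2.1 t
  · exact le_refl _

lemma wit_cond_of_lt {u : List X} (h : upExp Q g u < (a : EReal)) :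
    ∃ M : List X → EReal, IsSupermartingale Q M ∧ BddBelowP M ∧
      (∀ ω ∈ Gamma u, g ω ≤ liminfP M ω) ∧ M u < (a : EReal) :=
  exists_witness_lt h

lemma wit_at {u : List X} (h : upExp Q g u < (a : EReal)) :
    wit Q g a u u ≤ (a : EReal) := by
  unfold wit
  rw [dif_pos (wit_cond_of_lt h)]
  rw [extP_at _ List.prefix_rfl]
  exact (wit_cond_of_lt h).choose_spec.2.2.2.le

lemma wit_liminf {u : List X} (h : upExp Q g u < (a : EReal)) :
    ∀ ω ∈ Gamma u, g ω ≤ liminfP (wit Q g a u) ω := by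
  intro ω hω
  unfold wit
  rw [dif_pos (wit_cond_of_lt h)]
  rw [extP_liminf _ hω]
  exact (wit_cond_of_lt h).choose_spec.2.2.1 ω hω

open scoped Classical in
/-- One step of the betting state machine. -/
def tstep (Q : List X → (X → EReal) → EReal) (g : (ℕ → X) → EReal) (a b : ℝ)
    (st : TS X) (t : List X) : TS X :=
  match st with
  | .idle m => if upExp Q g t < (a : EReal) then .active m t else .idle m
  | .active m u => if (b : EReal) ≤ wit Q g a u t.dropLast then .idle (m + 1)
      else .active m u

open scoped Classical in
/-- The betting state at a situation. -/
def tstate (Q : List X → (X → EReal) → EReal) (g : (ℕ → X) → EReal) (a b : ℝ)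
    (s : List X) : List X → TS X := fun t =>
  if h : s <+: t ∧ s.length < t.length
  then tstep Q g a b (tstate Q g a b s t.dropLast) t
  else .idle 0
termination_by t => t.length
decreasing_by
  obtain ⟨-, h2⟩ := h
  rw [List.length_dropLast]
  omega

/-- The multiplying factor of the test supermartingale. -/
def trho (a b : ℝ) : ℝ := 1 / 2 + b / (2 * a)

open scoped Classical in
/-- The test supermartingale. -/
def tval (Q : List X → (X → EReal) → EReal) (g : (ℕ → X) → EReal) (a b : ℝ)
    (s : List X) : List X → EReal := fun t =>
  if s <+: t then
    match tstate Q g a b s t with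
    | .idle m => ((trho a b ^ m : ℝ) : EReal)
    | .active m u => ((trho a b ^ m / 2 : ℝ) : EReal)
        + ((trho a b ^ m / (2 * a) : ℝ) : EReal) * wit Q g a u t
  else ⊤

include ha hab in
lemma trho_gt_one : 1 < trho a b := by
  unfold trho
  have h1 : (1:ℝ)/2 < b / (2*a) := by
    rw [lt_div_iff₀ (by linarith)]
    nlinarith
  linarith

open scoped Classical in
lemma tstate_eq_def (s t : List X) :
    tstate Q g a b s t = if _h : s <+: t ∧ s.length < t.length
      then tstep Q g a b (tstate Q g a b s t.dropLast) t else .idle 0 := by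
  conv_lhs => rw [tstate]

lemma tstate_base (s : List X) : tstate Q g a b s s = .idle 0 := by
  rw [tstate_eq_def, dif_neg (fun h => lt_irrefl _ h.2)]

lemma tstate_child {s t : List X} (ht : s <+: t) (x : X) :
    tstate Q g a b s (t ++ [x]) = tstep Q g a b (tstate Q g a b s t) (t ++ [x]) := by
  rw [tstate_eq_def]
  have h1 : s <+: t ++ [x] := ht.trans (List.prefix_append _ _)
  have h2 : s.length < (t ++ [x]).length := by
    have := ht.length_le
    simp
    omega
  rw [dif_pos ⟨h1, h2⟩, List.dropLast_concat]

lemma tstep_idle_pos {t : List X} {m : ℕ} (hc : upExp Q g t < (a : EReal)) :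
    tstep Q g a b (.idle m) t = .active m t := if_pos hc

lemma tstep_idle_neg {t : List X} {m : ℕ} (hc : ¬ upExp Q g t < (a : EReal)) :
    tstep Q g a b (.idle m) t = .idle m := if_neg hc

lemma tstep_active_pos {t u : List X} {m : ℕ}
    (hc : (b : EReal) ≤ wit Q g a u t.dropLast) :
    tstep Q g a b (.active m u) t = .idle (m + 1) := if_pos hc

lemma tstep_active_neg {t u : List X} {m : ℕ}
    (hc : ¬ (b : EReal) ≤ wit Q g a u t.dropLast) :
    tstep Q g a b (.active m u) t = .active m u := if_neg hc

include ha hab in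
lemma tval_s (s : List X) : tval Q g a b s s = 1 := by
  unfold tval
  rw [if_pos List.prefix_rfl, tstate_base]
  norm_num

include hQ hg ha hab in
lemma tval_nonneg (s t : List X) : 0 ≤ tval Q g a b s t := by
  have hρ : (0:ℝ) < trho a b := lt_trans one_pos (trho_gt_one ha hab)
  unfold tval
  split
  · split
    · exact_mod_cast (pow_pos hρ _).le
    · refine add_nonneg (by exact_mod_cast (by positivity : (0:ℝ) ≤ trho a b ^ _ / 2)) ?_
      exact mul_nonneg (by exact_mod_cast (by positivity : (0:ℝ) ≤ trho a b ^ _ / (2*a)))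
        (wit_nonneg hQ hg _ _)
  · exact le_top

include ha in
lemma tval_coe_calc1 (m : ℕ) :
    ((trho a b ^ m / 2 : ℝ) : EReal) + ((trho a b ^ m / (2 * a) : ℝ) : EReal) * ((a : ℝ) : EReal)
      = ((trho a b ^ m : ℝ) : EReal) := by
  rw [← EReal.coe_mul, ← EReal.coe_add]
  norm_cast
  field_simp
  ring

include ha in
lemma tval_coe_calc2 (m : ℕ) :
    ((trho a b ^ (m + 1) : ℝ) : EReal)
      = ((trho a b ^ m / 2 : ℝ) : EReal) + ((trho a b ^ m / (2 * a) : ℝ) : EReal) * ((b : ℝ) : EReal) := by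
  rw [← EReal.coe_mul, ← EReal.coe_add]
  norm_cast
  rw [pow_succ]
  unfold trho
  field_simp

include hQ hg ha hab in
lemma tval_supermart (s : List X) : IsSupermartingale Q (tval Q g a b s) := by
  have hρpos : (0:ℝ) < trho a b := lt_trans one_pos (trho_gt_one ha hab)
  intro t
  by_cases hst : s <+: t
  swap
  · show _ ≤ tval Q g a b s t
    unfold tval
    rw [if_neg hst]
    exact le_top
  have hstx : ∀ x : X, s <+: t ++ [x] := fun x => hst.trans (List.prefix_append _ _)
  have htv0 : ∀ x : X, 0 ≤ tval Q g a b s (t ++ [x]) := fun x => tval_nonneg hQ hg ha hab s _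
  cases hts : tstate Q g a b s t with
  | idle m =>
    have htv : tval Q g a b s t = ((trho a b ^ m : ℝ) : EReal) := by
      unfold tval
      rw [if_pos hst, hts]
    rw [show (Q t fun x => tval Q g a b s (t ++ [x])) ≤ tval Q g a b s t ↔
      (Q t fun x => tval Q g a b s (t ++ [x])) ≤ ((trho a b ^ m : ℝ) : EReal) from by rw [htv]]
    refine E_le_const (hQ t) ⟨0, fun x => by exact_mod_cast htv0 x⟩ ?_
    intro x
    by_cases hx : upExp Q g (t ++ [x]) < (a : EReal)
    · have h1 : tstate Q g a b s (t ++ [x]) = .active m (t ++ [x]) := by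
        rw [tstate_child hst x, hts]
        unfold tstep
        exact if_pos hx
      have h2 : tval Q g a b s (t ++ [x]) = ((trho a b ^ m / 2 : ℝ) : EReal)
          + ((trho a b ^ m / (2 * a) : ℝ) : EReal) * wit Q g a (t ++ [x]) (t ++ [x]) := by
        unfold tval
        rw [if_pos (hstx x), h1]
      rw [h2]
      calc ((trho a b ^ m / 2 : ℝ) : EReal)
          + ((trho a b ^ m / (2 * a) : ℝ) : EReal) * wit Q g a (t ++ [x]) (t ++ [x])
          ≤ ((trho a b ^ m / 2 : ℝ) : EReal)
            + ((trho a b ^ m / (2 * a) : ℝ) : EReal) * ((a : ℝ) : EReal) := by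
            refine add_le_add_right ?_ _
            refine mul_le_mul_of_nonneg_left (wit_at hx) ?_
            exact_mod_cast (by positivity : (0:ℝ) ≤ trho a b ^ m / (2 * a))
        _ = ((trho a b ^ m : ℝ) : EReal) := tval_coe_calc1 ha m
    · have h1 : tstate Q g a b s (t ++ [x]) = .idle m := by
        rw [tstate_child hst x, hts]
        unfold tstep
        exact if_neg hx
      have h2 : tval Q g a b s (t ++ [x]) = ((trho a b ^ m : ℝ) : EReal) := by
        unfold tval
        rw [if_pos (hstx x), h1]
      rw [h2]
  | active m u =>
    have htv : tval Q g a b s t = ((trho a b ^ m / 2 : ℝ) : EReal)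
        + ((trho a b ^ m / (2 * a) : ℝ) : EReal) * wit Q g a u t := by
      unfold tval
      rw [if_pos hst, hts]
    by_cases hex : (b : EReal) ≤ wit Q g a u t
    · have h1 : ∀ x : X, tstate Q g a b s (t ++ [x]) = .idle (m + 1) := by
        intro x
        rw [tstate_child hst x, hts]
        unfold tstep
        rw [List.dropLast_concat]
        exact if_pos hex
      have h2 : (fun x : X => tval Q g a b s (t ++ [x]))
          = fun _ : X => ((trho a b ^ (m + 1) : ℝ) : EReal) := by
        funext x
        unfold tval
        rw [if_pos (hstx x), h1 x]
      rw [h2, E_const (hQ t), htv, tval_coe_calc2 ha m]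
      refine add_le_add_right ?_ _
      refine mul_le_mul_of_nonneg_left hex ?_
      exact_mod_cast (by positivity : (0:ℝ) ≤ trho a b ^ m / (2 * a))
    · have h1 : ∀ x : X, tstate Q g a b s (t ++ [x]) = .active m u := by
        intro x
        rw [tstate_child hst x, hts]
        unfold tstep
        rw [List.dropLast_concat]
        exact if_neg hex
      have h2 : (fun x : X => tval Q g a b s (t ++ [x]))
          = fun x : X => ((trho a b ^ m / 2 : ℝ) : EReal)
            + ((trho a b ^ m / (2 * a) : ℝ) : EReal) * wit Q g a u (t ++ [x]) := by
        funext x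
        unfold tval
        rw [if_pos (hstx x), h1 x]
      rw [h2, htv]
      have hlpos : (0:ℝ) < trho a b ^ m / (2 * a) := by positivity
      refine le_trans (E_affine (hQ t) (g := fun x => wit Q g a u (t ++ [x]))
        (fun x => wit_nonneg hQ hg u _) _ hlpos) ?_
      refine add_le_add_right ?_ _
      refine mul_le_mul_of_nonneg_left (wit_supermart hQ u t) ?_
      exact_mod_cast hlpos.le

include hQ hg ha hab in
lemma tval_tendsto_top {s : List X} {ω : ℕ → X} (hω : ω ∈ Gamma s)
    (hfreq : ∃ᶠ k in atTop, upExp Q g (pfx ω k) < (a : EReal))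
    (hgb : (b : EReal) < g ω) :
    Tendsto (fun k => tval Q g a b s (pfx ω k)) atTop (𝓝 (⊤ : EReal)) := by
  have hρ1 : 1 < trho a b := trho_gt_one ha hab
  have hρpos : (0:ℝ) < trho a b := lt_trans one_pos hρ1
  have hpre : ∀ k, s.length ≤ k → s <+: pfx ω k := fun k hk => Gamma_prefix hω hk
  have hstep : ∀ k, s.length ≤ k → tstate Q g a b s (pfx ω (k + 1))
      = tstep Q g a b (tstate Q g a b s (pfx ω k)) (pfx ω (k + 1)) := by
    intro k hk
    rw [tstate_eq_def]
    have h1 : s <+: pfx ω (k + 1) := hpre _ (le_trans hk (Nat.le_succ k))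
    have h2 : s.length < (pfx ω (k + 1)).length := by rw [pfx_length]; omega
    rw [dif_pos ⟨h1, h2⟩, pfx_dropLast]
  have hm_step : ∀ k, s.length ≤ k →
      (tstate Q g a b s (pfx ω k)).m ≤ (tstate Q g a b s (pfx ω (k + 1))).m := by
    intro k hk
    rw [hstep k hk]
    cases tstate Q g a b s (pfx ω k) with
    | idle m =>
      by_cases hc : upExp Q g (pfx ω (k + 1)) < (a : EReal)
      · rw [tstep_idle_pos hc]; simp [TS.m]
      · rw [tstep_idle_neg hc]
    | active m u =>
      by_cases hc : (b : EReal) ≤ wit Q g a u (pfx ω (k + 1)).dropLast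
      · rw [tstep_active_pos hc]; simp [TS.m]
      · rw [tstep_active_neg hc]
  have hm_mono : ∀ k k', s.length ≤ k → k ≤ k' →
      (tstate Q g a b s (pfx ω k)).m ≤ (tstate Q g a b s (pfx ω k')).m := by
    intro k k' hk hkk
    induction k', hkk using Nat.le_induction with
    | base => exact le_refl _
    | succ k' h ih => exact le_trans ih (hm_step k' (le_trans hk h))
  have hωs : pfx ω s.length = s := hω
  have hinv : ∀ k, s.length ≤ k → ∀ m u, tstate Q g a b s (pfx ω k) = .active m u →
      upExp Q g u < (a : EReal) ∧ ω ∈ Gamma u := by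
    intro k hk
    induction k, hk using Nat.le_induction with
    | base =>
      intro m u h
      rw [hωs, tstate_base] at h
      cases h
    | succ k hk ih =>
      intro m u h
      rw [hstep k hk] at h
      cases hst : tstate Q g a b s (pfx ω k) with
      | idle m' =>
        rw [hst] at h
        by_cases hc : upExp Q g (pfx ω (k + 1)) < (a : EReal)
        · rw [tstep_idle_pos hc] at h
          cases h
          exact ⟨hc, pfx_mem_Gamma ω (k + 1)⟩
        · rw [tstep_idle_neg hc] at h
          cases h
      | active m' u' =>
        rw [hst] at h
        by_cases hc : (b : EReal) ≤ wit Q g a u' (pfx ω (k + 1)).dropLast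
        · rw [tstep_active_pos hc] at h
          cases h
        · rw [tstep_active_neg hc] at h
          cases h
          exact ih m u hst
  have hexit : ∀ K m u, s.length ≤ K → tstate Q g a b s (pfx ω K) = .active m u →
      ∃ K', K < K' ∧ tstate Q g a b s (pfx ω K') = .idle (m + 1) := by
    intro K m u hK hact
    obtain ⟨hua, huω⟩ := hinv K hK m u hact
    have hlim : (b : EReal) < liminf (fun k => wit Q g a u (pfx ω k)) atTop :=
      lt_of_lt_of_le hgb (wit_liminf hua ω huω)
    have hev : ∀ᶠ k in atTop, (b : EReal) < wit Q g a u (pfx ω k) :=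
      eventually_lt_of_lt_liminf hlim
    obtain ⟨N, hN⟩ := eventually_atTop.mp hev
    have hper : ∀ j, tstate Q g a b s (pfx ω (K + j)) = .active m u ∨
        ∃ K', K < K' ∧ K' ≤ K + j ∧ tstate Q g a b s (pfx ω K') = .idle (m + 1) := by
      intro j
      induction j with
      | zero => left; simpa using hact
      | succ j ih =>
        rcases ih with hact' | ⟨K', h1, h2, h3⟩
        · have h5 := hstep (K + j) (by omega)
          rw [hact'] at h5
          by_cases hw : (b : EReal) ≤ wit Q g a u (pfx ω (K + j))
          · right
            refine ⟨K + j + 1, by omega, by omega, ?_⟩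
            rw [h5]
            refine tstep_active_pos ?_
            rwa [pfx_dropLast]
          · left
            show tstate Q g a b s (pfx ω (K + j + 1)) = _
            rw [h5]
            refine tstep_active_neg ?_
            rwa [pfx_dropLast]
        · exact Or.inr ⟨K', h1, by omega, h3⟩
    rcases hper N with hact' | ⟨K', h1, _, h3⟩
    · have hw : (b : EReal) ≤ wit Q g a u (pfx ω (K + N)) := (hN (K + N) (by omega)).le
      have h5 := hstep (K + N) (by omega)
      rw [hact'] at h5
      refine ⟨K + N + 1, by omega, ?_⟩
      rw [h5]
      refine tstep_active_pos ?_
      rwa [pfx_dropLast]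
    · exact ⟨K', h1, h3⟩
  have hc4 : ∀ K, s.length ≤ K →
      ∃ K', K < K' ∧ (tstate Q g a b s (pfx ω K)).m < (tstate Q g a b s (pfx ω K')).m := by
    intro K hK
    cases hstK : tstate Q g a b s (pfx ω K) with
    | active m u =>
      obtain ⟨K', h1, h2⟩ := hexit K m u hK hstK
      exact ⟨K', h1, by rw [h2]; simp [TS.m]⟩
    | idle m =>
      obtain ⟨k1, hk11, hk12⟩ := frequently_atTop.mp hfreq (K + 1)
      have hk1pos : 1 ≤ k1 := by omega
      have hk1L : s.length ≤ k1 - 1 := by omega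
      cases hst1 : tstate Q g a b s (pfx ω (k1 - 1)) with
      | active m' u' =>
        have hm' : m ≤ m' := by
          have := hm_mono K (k1 - 1) hK (by omega)
          rw [hstK, hst1] at this
          simpa [TS.m] using this
        obtain ⟨K', h1, h2⟩ := hexit (k1 - 1) m' u' hk1L hst1
        refine ⟨K', by omega, ?_⟩
        rw [h2]
        simp only [TS.m]
        omega
      | idle m' =>
        have hm' : m ≤ m' := by
          have := hm_mono K (k1 - 1) hK (by omega)
          rw [hstK, hst1] at this
          simpa [TS.m] using this
        have h5 := hstep (k1 - 1) hk1L
        have hk1e : k1 - 1 + 1 = k1 := by omega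
        rw [hk1e] at h5
        rw [hst1] at h5
        have h6 : tstate Q g a b s (pfx ω k1) = .active m' (pfx ω k1) := by
          rw [h5]
          exact tstep_idle_pos hk12
        obtain ⟨K', h1, h2⟩ := hexit k1 m' (pfx ω k1) (by omega) h6
        refine ⟨K', by omega, ?_⟩
        rw [h2]
        simp only [TS.m]
        omega
  have hub : ∀ C : ℕ, ∃ K, s.length ≤ K ∧ C ≤ (tstate Q g a b s (pfx ω K)).m := by
    intro C
    induction C with
    | zero => exact ⟨s.length, le_refl _, Nat.zero_le _⟩
    | succ C ih =>
      obtain ⟨K, hK1, hK2⟩ := ih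
      obtain ⟨K', h1, h2⟩ := hc4 K hK1
      exact ⟨K', by omega, by omega⟩
  rw [EReal.tendsto_nhds_top_iff_real]
  intro r
  obtain ⟨C, hC⟩ := pow_unbounded_of_one_lt (2 * r) hρ1
  obtain ⟨K, hK1, hK2⟩ := hub C
  rw [eventually_atTop]
  refine ⟨K, fun k hk => ?_⟩
  have hkL : s.length ≤ k := le_trans hK1 hk
  have hmk : C ≤ (tstate Q g a b s (pfx ω k)).m := le_trans hK2 (hm_mono K k hK1 hk)
  have hlow : ((trho a b ^ (tstate Q g a b s (pfx ω k)).m / 2 : ℝ) : EReal)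
      ≤ tval Q g a b s (pfx ω k) := by
    unfold tval
    rw [if_pos (hpre k hkL)]
    cases hstk : tstate Q g a b s (pfx ω k) with
    | idle m =>
      simp only [TS.m]
      have h0 : (0:ℝ) ≤ trho a b ^ m := by positivity
      have : trho a b ^ m / 2 ≤ trho a b ^ m := by linarith
      exact_mod_cast this
    | active m u =>
      simp only [TS.m]
      refine le_add_of_nonneg_right ?_
      refine mul_nonneg ?_ (wit_nonneg hQ hg u _)
      exact_mod_cast (by positivity : (0:ℝ) ≤ trho a b ^ m / (2 * a))
  refine lt_of_lt_of_le ?_ hlow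
  have hpow : trho a b ^ C ≤ trho a b ^ (tstate Q g a b s (pfx ω k)).m :=
    pow_le_pow_right₀ hρ1.le hmk
  exact_mod_cast (by nlinarith : r < trho a b ^ (tstate Q g a b s (pfx ω k)).m / 2)

end Test

/-! ### Main construction -/

section MainSec
variable {X : Type*} [Fintype X] [Nonempty X]
  {Q : List X → (X → EReal) → EReal} (hQ : ∀ s : List X, IsUpperExpectation (Q s))
include hQ

theorem main_le (s : List X) (fs : ℕ → (ℕ → X) → EReal)
    (hpos : ∀ n ω, 0 ≤ fs n ω)
    (hmono : ∀ n ω, fs n ω ≤ fs (n + 1) ω)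
    (f : (ℕ → X) → EReal)
    (hconv : ∀ ω, Tendsto (fun n => fs n ω) atTop (𝓝 (f ω))) :
    upExp Q f s ≤ ⨆ n, upExp Q (fs n) s := by
  classical
  have hfs_mono : ∀ ω, Monotone fun n => fs n ω :=
    fun ω => monotone_nat_of_le_succ fun n => hmono n ω
  have hf_sup : ∀ ω, f ω = ⨆ n, fs n ω :=
    fun ω => tendsto_nhds_unique (hconv ω) (tendsto_atTop_iSup (hfs_mono ω))
  set V : ℕ → List X → EReal := fun n t => upExp Q (fs n) t with hV
  have hV_sm : ∀ n, IsSupermartingale Q (V n) := fun n => upExp_supermart hQ (hpos n)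
  have hV_nonneg : ∀ n t, 0 ≤ V n t := fun n t => upExp_nonneg hQ (hpos n) t
  have hV_mono : ∀ n t, V n t ≤ V (n + 1) t :=
    fun n t => upExp_mono (fun ω _ => hmono n ω)
  set W : List X → EReal := fun t => ⨆ n, V n t with hW
  have hW_sm : IsSupermartingale Q W := iSup_supermart hQ hV_sm hV_nonneg hV_mono
  have hW_nonneg : ∀ t, 0 ≤ W t := fun t =>
    le_trans (hV_nonneg 0 t) (le_iSup (fun n => V n t) 0)
  refine le_of_forall_add_le fun ε hε => ?_
  -- test supermartingales, enumerated
  obtain ⟨e, he⟩ := exists_surjective_nat (ℕ × ℚ × ℚ)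
  set TT : ℕ → List X → EReal := fun j t =>
    if _h : 0 < ((e j).2.1 : ℝ) ∧ ((e j).2.1 : ℝ) < ((e j).2.2 : ℝ)
    then tval Q (fs (e j).1) ((e j).2.1 : ℝ) ((e j).2.2 : ℝ) s t
    else 1 with hTT
  have hTT_cases : ∀ j, (∃ h : 0 < ((e j).2.1 : ℝ) ∧ ((e j).2.1 : ℝ) < ((e j).2.2 : ℝ),
      TT j = tval Q (fs (e j).1) ((e j).2.1 : ℝ) ((e j).2.2 : ℝ) s)
      ∨ TT j = fun _ => 1 := by
    intro j
    by_cases h : 0 < ((e j).2.1 : ℝ) ∧ ((e j).2.1 : ℝ) < ((e j).2.2 : ℝ)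
    · exact Or.inl ⟨h, funext fun t => dif_pos h⟩
    · exact Or.inr (funext fun t => dif_neg h)
  have hTT_sm : ∀ j, IsSupermartingale Q (TT j) := by
    intro j
    rcases hTT_cases j with ⟨h, heq⟩ | heq
    · rw [heq]
      exact tval_supermart hQ (hpos _) h.1 h.2 s
    · rw [heq]
      intro t
      have := E_const (hQ t) 1
      exact le_of_eq (by exact_mod_cast this)
  have hTT_nonneg : ∀ j t, 0 ≤ TT j t := by
    intro j t
    rcases hTT_cases j with ⟨h, heq⟩ | heq
    · rw [heq]
      exact tval_nonneg hQ (hpos _) h.1 h.2 s t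
    · rw [heq]
      exact zero_le_one
  have hTT_s : ∀ j, TT j s ≤ 1 := by
    intro j
    rcases hTT_cases j with ⟨h, heq⟩ | heq
    · rw [heq]
      exact le_of_eq (tval_s h.1 h.2 s)
    · rw [heq]
  set w : ℕ → ℝ := fun j => ε * (1 / 2) ^ (j + 1) with hw
  have hw_pos : ∀ j, 0 < w j := fun j => by positivity
  set S : ℕ → List X → EReal := fun N t =>
    ∑ j ∈ Finset.range N, ((w j : ℝ) : EReal) * TT j t with hS
  have hS_zero : S 0 = fun _ => (0 : EReal) := funext fun t => by simp [hS]
  have hS_succ : ∀ N, S (N + 1) = fun t => S N t + ((w N : ℝ) : EReal) * TT N t :=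
    fun N => funext fun t => by simp [hS, Finset.sum_range_succ]
  have hS_nonneg : ∀ N t, 0 ≤ S N t := fun N t => Finset.sum_nonneg fun j _ =>
    mul_nonneg (by exact_mod_cast (hw_pos j).le) (hTT_nonneg j t)
  have hS_sm : ∀ N, IsSupermartingale Q (S N) := by
    intro N
    induction N with
    | zero =>
      rw [hS_zero]
      intro t
      have := E_const (hQ t) 0
      exact le_of_eq (by exact_mod_cast this)
    | succ N ih =>
      rw [hS_succ N]
      exact add_supermart hQ ih (smul_supermart hQ (hw_pos N) (hTT_sm N) ⟨0, hTT_nonneg N⟩)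
        ⟨0, hS_nonneg N⟩
        ⟨0, fun t => mul_nonneg (by exact_mod_cast (hw_pos N).le) (hTT_nonneg N t)⟩
  have hS_mono : ∀ N t, S N t ≤ S (N + 1) t := by
    intro N t
    rw [hS_succ N]
    exact le_add_of_nonneg_right
      (mul_nonneg (by exact_mod_cast (hw_pos N).le) (hTT_nonneg N t))
  set Tstar : List X → EReal := fun t => ⨆ N, S N t with hTstar
  have hTstar_sm : IsSupermartingale Q Tstar := iSup_supermart hQ hS_sm hS_nonneg hS_mono
  have hTstar_nonneg : ∀ t, 0 ≤ Tstar t := fun t =>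
    le_trans (hS_nonneg 0 t) (le_iSup (fun N => S N t) 0)
  have hTstar_single : ∀ j t, ((w j : ℝ) : EReal) * TT j t ≤ Tstar t := by
    intro j t
    refine le_trans ?_ (le_iSup (fun N => S N t) (j + 1))
    rw [hS]
    refine Finset.single_le_sum (f := fun i => ((w i : ℝ) : EReal) * TT i t)
      (fun i _ => mul_nonneg (by exact_mod_cast (hw_pos i).le) (hTT_nonneg i t)) ?_
    exact Finset.self_mem_range_succ j
  have hTstar_s : Tstar s ≤ (ε : EReal) := by
    refine iSup_le fun N => ?_
    have h1 : S N s ≤ (((Finset.range N).sum w : ℝ) : EReal) := by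
      induction N with
      | zero =>
        rw [hS_zero]
        simp
      | succ N ih =>
        rw [hS_succ N]
        rw [Finset.sum_range_succ, EReal.coe_add]
        refine add_le_add ih ?_
        calc ((w N : ℝ) : EReal) * TT N s ≤ ((w N : ℝ) : EReal) * 1 :=
              mul_le_mul_of_nonneg_left (hTT_s N) (by exact_mod_cast (hw_pos N).le)
          _ = ((w N : ℝ) : EReal) := mul_one _
    refine le_trans h1 ?_
    have h2 : (Finset.range N).sum w ≤ ε := by
      rw [hw]
      have h3 : ∀ j ∈ Finset.range N, ε * (1/2:ℝ)^(j+1) = ε/2 * (1/2)^j := by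
        intro j _
        rw [pow_succ]
        ring
      rw [Finset.sum_congr rfl h3, ← Finset.mul_sum]
      have h4 := sum_geometric_two_le N
      nlinarith
    exact_mod_cast h2
  -- the final supermartingale
  set MM : List X → EReal := fun t => W t + Tstar t with hMM
  have hMM_sm : IsSupermartingale Q MM :=
    add_supermart hQ hW_sm hTstar_sm ⟨0, hW_nonneg⟩ ⟨0, hTstar_nonneg⟩
  have hMM_bdd : BddBelowP MM := ⟨0, fun t => by
    exact_mod_cast add_nonneg (hW_nonneg t) (hTstar_nonneg t)⟩
  have hMM_lim : ∀ ω ∈ Gamma s, f ω ≤ liminfP MM ω := by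
    intro ω hω
    by_cases hgood : ∀ n, fs n ω ≤ liminf (fun k => V n (pfx ω k)) atTop
    · have h1 : liminfP W ω ≤ liminfP MM ω := by
        refine liminf_le_liminf ?_
        filter_upwards with k
        exact le_add_of_nonneg_right (hTstar_nonneg _)
      refine le_trans ?_ h1
      rw [hf_sup ω]
      refine iSup_le fun n => ?_
      refine le_trans (hgood n) ?_
      refine liminf_le_liminf ?_
      filter_upwards with k
      exact le_iSup (fun n => V n (pfx ω k)) n
    · push_neg at hgood
      obtain ⟨n, hbad⟩ := hgood
      obtain ⟨qa, hA1, hA2⟩ := EReal.exists_rat_btwn_of_lt hbad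
      obtain ⟨qb, hB1, hB2⟩ := EReal.exists_rat_btwn_of_lt hA2
      have hApos : (0:ℝ) < (qa : ℝ) := by
        have h0 : (0 : EReal) ≤ liminf (fun k => V n (pfx ω k)) atTop := by
          refine le_liminf_of_le ?_ ?_
          · isBoundedDefault
          · filter_upwards with k
            exact hV_nonneg n _
        exact_mod_cast lt_of_le_of_lt h0 hA1
      have hAB : ((qa : ℝ) : ℝ) < ((qb : ℝ) : ℝ) := by exact_mod_cast hB1
      obtain ⟨j, hj⟩ := he (n, qa, qb)
      have hcond : 0 < ((e j).2.1 : ℝ) ∧ ((e j).2.1 : ℝ) < ((e j).2.2 : ℝ) := by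
        rw [hj]
        exact ⟨hApos, hAB⟩
      have heq : TT j = tval Q (fs (e j).1) ((e j).2.1 : ℝ) ((e j).2.2 : ℝ) s :=
        funext fun t => dif_pos hcond
      rw [hj] at heq
      simp only at heq
      have hfreq : ∃ᶠ k in atTop, upExp Q (fs n) (pfx ω k) < ((qa : ℝ) : EReal) :=
        frequently_lt_of_liminf_lt (h := hA1)
      have htop : Tendsto (fun k => TT j (pfx ω k)) atTop (𝓝 (⊤ : EReal)) := by
        rw [heq]
        exact tval_tendsto_top hQ (hpos n) hApos hAB hω hfreq hB2
      have htop2 : Tendsto (fun k => ((w j : ℝ) : EReal) * TT j (pfx ω k)) atTop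
          (𝓝 (⊤ : EReal)) := tendsto_top_const_mul (hw_pos j) htop
      have hchain : ∀ t, ((w j : ℝ) : EReal) * TT j t ≤ MM t := fun t =>
        le_trans (hTstar_single j t) (le_add_of_nonneg_left (hW_nonneg t))
      have hliminf_top : liminfP MM ω = ⊤ := by
        rw [eq_top_iff]
        have h5 : liminf (fun k => ((w j : ℝ) : EReal) * TT j (pfx ω k)) atTop = ⊤ :=
          htop2.liminf_eq
        rw [← h5]
        refine liminf_le_liminf ?_
        filter_upwards with k
        exact hchain _
      rw [hliminf_top]
      exact le_top
  have hfinal : upExp Q f s ≤ MM s := upExp_le_of_witness hMM_sm hMM_bdd hMM_lim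
  refine le_trans hfinal ?_
  have hMMs : MM s = W s + Tstar s := rfl
  rw [hMMs]
  exact add_le_add_right hTstar_s _

end MainSec
end Stmt13Aux

/-- upward monotone convergence of the game-theoretic upper expectation. -/
theorem stmt13 {X : Type*} [Fintype X] [Nonempty X]
    (Q : List X → (X → EReal) → EReal) (hQ : ∀ s : List X, IsUpperExpectation (Q s))
    (s : List X) (fs : ℕ → (ℕ → X) → EReal)
    (hbdd : ∀ n, BddBelowF (fs n))
    (hmono : ∀ n ω, fs n ω ≤ fs (n + 1) ω)
    (f : (ℕ → X) → EReal)
    (hconv : ∀ ω, Tendsto (fun n => fs n ω) atTop (𝓝 (f ω))) :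
    Tendsto (fun n => upExp Q (fs n) s) atTop (𝓝 (upExp Q f s)) := by
  classical
  open Stmt13Aux in
  obtain ⟨B0, hB0⟩ := hbdd 0
  set c : ℝ := max (-B0) 0 with hc
  have hc0 : 0 ≤ c := le_max_right _ _
  have hcB : 0 ≤ B0 + c := by
    have := le_max_left (-B0) 0
    have h2 : -B0 ≤ c := by rw [hc]; exact le_max_left _ _
    linarith
  have hchain : ∀ n ω, fs 0 ω ≤ fs n ω := by
    intro n ω
    induction n with
    | zero => exact le_refl _
    | succ n ih => exact le_trans ih (hmono n ω)
  set gs : ℕ → (ℕ → X) → EReal := fun n ω => fs n ω + (c : EReal) with hgs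
  set gg : (ℕ → X) → EReal := fun ω => f ω + (c : EReal) with hgg
  have hgs_pos : ∀ n ω, 0 ≤ gs n ω := by
    intro n ω
    have h1 : ((B0 : ℝ) : EReal) + (c : EReal) ≤ fs n ω + (c : EReal) :=
      add_le_add_left (le_trans (hB0 ω) (hchain n ω)) _
    refine le_trans ?_ h1
    rw [← EReal.coe_add]
    exact_mod_cast hcB
  have hgs_mono : ∀ n ω, gs n ω ≤ gs (n + 1) ω :=
    fun n ω => add_le_add_left (hmono n ω) _
  have hcont : Continuous (fun x : EReal => x + (c : EReal)) :=
    (Stmt13Aux.addIso c).toHomeomorph.continuous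
  have hgs_conv : ∀ ω, Tendsto (fun n => gs n ω) atTop (𝓝 (gg ω)) := fun ω =>
    Tendsto.comp (hcont.tendsto (f ω)) (hconv ω)
  have hmain : upExp Q gg s ≤ ⨆ n, upExp Q (gs n) s :=
    Stmt13Aux.main_le hQ s gs hgs_pos hgs_mono gg hgs_conv
  have hf_sup : ∀ ω, f ω = ⨆ n, fs n ω := fun ω =>
    tendsto_nhds_unique (hconv ω)
      (tendsto_atTop_iSup (monotone_nat_of_le_succ fun n => hmono n ω))
  have hle : ∀ n, upExp Q (gs n) s ≤ upExp Q gg s := fun n =>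
    Stmt13Aux.upExp_mono fun ω _ => add_le_add_left
      (by rw [hf_sup ω]; exact le_iSup (fun n => fs n ω) n) _
  have hkey : (⨆ n, upExp Q (gs n) s) = upExp Q gg s :=
    le_antisymm (iSup_le hle) hmain
  have hmono_gs : Monotone fun n => upExp Q (gs n) s :=
    monotone_nat_of_le_succ fun n => Stmt13Aux.upExp_mono fun ω _ => hgs_mono n ω
  have htend : Tendsto (fun n => upExp Q (gs n) s) atTop (𝓝 (upExp Q gg s)) :=
    hkey ▸ tendsto_atTop_iSup hmono_gs
  have hshift : ∀ n, upExp Q (gs n) s = upExp Q (fs n) s + (c : EReal) :=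
    fun n => Stmt13Aux.upExp_shift hQ (fs n) c s
  have hshiftg : upExp Q gg s = upExp Q f s + (c : EReal) :=
    Stmt13Aux.upExp_shift hQ f c s
  have hcont2 : Continuous (fun x : EReal => x - (c : EReal)) :=
    ((Stmt13Aux.addIso c).symm).toHomeomorph.continuous
  have htend2 : Tendsto (fun n => upExp Q (gs n) s - (c : EReal)) atTop
      (𝓝 (upExp Q gg s - (c : EReal))) :=
    Tendsto.comp (hcont2.tendsto _) htend
  have h1 : (fun n => upExp Q (gs n) s - (c : EReal)) = fun n => upExp Q (fs n) s :=
    funext fun n => by rw [hshift n, EReal.add_sub_cancel_right]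
  have h2 : upExp Q gg s - (c : EReal) = upExp Q f s := by
    rw [hshiftg, EReal.add_sub_cancel_right]
  rw [h1, h2] at htend2
  exact htend2
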